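/- Suppose for each player i there exists λ_i ∈ R^{m_i} with λ_i ≥ 0, ∇_{x_i} f_i(x) = A_i^T λ_i, complementarity λ_i ⊥ (A_i x_i − b_i(x_{−i})), and A_i x_i − b_i(x_{−i}) ≥ 0. Then for each i there exists a subset J_i ⊆ {1,...,m_i} with |J_i| = rank(A_i) and rank(A_{i,J_i}) = rank(A_i), and a vector λ_{i,J_i} ≥ 0 supported on J_i, such that ∇_{x_i} f_i(x) = A_{i,J_i}^T λ_{i,J_i} and λ_{i,J_i} ⊥ (A_{i,J_i} x_i − b_{i,J_i}(x_{−i})). -/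

import Mathlib

open Matrix Submodule Set

private lemma mulVecT_eq_sum {M n : ℕ} (A : Matrix (Fin M) (Fin n) ℝ)
    (lam : Fin M → ℝ) : Aᵀ.mulVec lam = ∑ j, lam j • A j := by
  funext k
  simp [Matrix.mulVec, dotProduct, Matrix.transpose_apply, Finset.sum_apply, mul_comm]

private lemma carath {M n : ℕ} (v : Fin M → (Fin n → ℝ)) (k : ℕ) :
    ∀ lam : Fin M → ℝ, (∀ j, 0 ≤ lam j) →
      (Finset.univ.filter (fun j => lam j ≠ 0)).card ≤ k →
      ∃ mu : Fin M → ℝ, (∀ j, 0 ≤ mu j) ∧ (∀ j, lam j = 0 → mu j = 0) ∧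
        (∑ j, mu j • v j) = (∑ j, lam j • v j) ∧
        LinearIndependent ℝ (fun j : {j // mu j ≠ 0} => v j) := by
  classical
  induction k with
  | zero =>
    intro lam hpos hcard
    refine ⟨lam, hpos, fun j h => h, rfl, ?_⟩
    have hempty := Finset.card_eq_zero.mp (Nat.le_zero.mp hcard)
    rw [Finset.eq_empty_iff_forall_notMem] at hempty
    have : IsEmpty {j // lam j ≠ 0} := by
      constructor
      rintro ⟨j, hj⟩
      exact hempty j (by simp [hj])
    exact linearIndependent_empty_type
  | succ k ih =>
    intro lam hpos hcard
    by_cases hind : LinearIndependent ℝ (fun j : {j // lam j ≠ 0} => v j)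
    · exact ⟨lam, hpos, fun j h => h, rfl, hind⟩
    -- extract a dependence relation with a positive coefficient
    obtain ⟨g, hgsum, ⟨j₀, hj₀⟩⟩ := Fintype.not_linearIndependent_iff.mp hind
    have key : ∃ c : Fin M → ℝ, (∀ j, lam j = 0 → c j = 0) ∧
        (∑ j, c j • v j = 0) ∧ ∃ j₁, 0 < c j₁ := by
      set c : Fin M → ℝ := fun j => if h : lam j ≠ 0 then g ⟨j, h⟩ else 0 with hc
      have hc0 : ∀ j, lam j = 0 → c j = 0 := by
        intro j h; simp [hc, h]
      have hcsum : ∑ j, c j • v j = 0 := by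
        rw [← hgsum]
        calc ∑ j, c j • v j
            = ∑ j ∈ Finset.univ.filter (fun j => lam j ≠ 0), c j • v j :=
              (Finset.sum_filter_of_ne (by intro x _ hx h0; simp [hc, h0] at hx)).symm
          _ = ∑ i : {j // lam j ≠ 0}, c i.val • v i.val :=
              Finset.sum_subtype _ (by simp) (fun j => c j • v j)
          _ = ∑ i : {j // lam j ≠ 0}, g i • v i.val := by
              apply Finset.sum_congr rfl
              intro i _
              have : c i.val = g i := by simp [hc, i.2]
              rw [this]
      have hcj₀ : c j₀.val ≠ 0 := by
        have : c j₀.val = g j₀ := by simp [hc, j₀.2]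
        rw [this]; exact hj₀
      by_cases hp : ∃ j₁, 0 < c j₁
      · exact ⟨c, hc0, hcsum, hp⟩
      · push_neg at hp
        refine ⟨-c, fun j h => by simp [hc0 j h], by simp [hcsum], ⟨j₀.val, ?_⟩⟩
        have := lt_of_le_of_ne (hp j₀.val) hcj₀
        simpa using this
    obtain ⟨c, hc0, hcsum, j₁, hj₁⟩ := key
    -- minimize lam j / c j over positive c j
    obtain ⟨js, hjsmem, hjsmin⟩ := Finset.exists_min_image
      (Finset.univ.filter (fun j => 0 < c j)) (fun j => lam j / c j)
      ⟨j₁, by simp [hj₁]⟩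
    have hcjs : 0 < c js := by simpa using hjsmem
    set t := lam js / c js with ht
    have ht0 : 0 ≤ t := div_nonneg (hpos js) hcjs.le
    set lam' : Fin M → ℝ := fun j => lam j - t * c j with hlam'
    have hlam'pos : ∀ j, 0 ≤ lam' j := by
      intro j
      by_cases hcj : 0 < c j
      · have := hjsmin j (by simp [hcj])
        have : t * c j ≤ lam j := by
          rw [ht] at this ⊢
          calc lam js / c js * c j ≤ lam j / c j * c j := by
                exact mul_le_mul_of_nonneg_right this hcj.le
            _ = lam j := div_mul_cancel₀ _ hcj.ne'
        simpa [hlam'] using this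
      · push_neg at hcj
        have : t * c j ≤ 0 := mul_nonpos_of_nonneg_of_nonpos ht0 hcj
        have := sub_nonneg.mpr (this.trans (hpos j))
        simpa [hlam'] using this
    have hlam'0 : ∀ j, lam j = 0 → lam' j = 0 := by
      intro j h; simp [hlam', h, hc0 j h]
    have hjs0 : lam' js = 0 := by
      simp only [hlam', ht]
      field_simp
      simp
    have hlamjs : lam js ≠ 0 := by
      intro h
      exact absurd (hc0 js h) hcjs.ne'
    have hsub : Finset.univ.filter (fun j => lam' j ≠ 0) ⊆
        (Finset.univ.filter (fun j => lam j ≠ 0)).erase js := by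
      intro j hj
      simp only [Finset.mem_filter, Finset.mem_univ, true_and] at hj
      refine Finset.mem_erase.mpr ⟨?_, ?_⟩
      · rintro rfl; exact hj hjs0
      · simp only [Finset.mem_filter, Finset.mem_univ, true_and]
        intro h0; exact hj (hlam'0 j h0)
    have hcard' : (Finset.univ.filter (fun j => lam' j ≠ 0)).card ≤ k := by
      have h1 := Finset.card_le_card hsub
      have h2 : ((Finset.univ.filter (fun j => lam j ≠ 0)).erase js).card <
          (Finset.univ.filter (fun j => lam j ≠ 0)).card :=
        Finset.card_erase_lt_of_mem (by simp [hlamjs])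
      omega
    have hsum' : ∑ j, lam' j • v j = ∑ j, lam j • v j := by
      simp only [hlam', sub_smul, Finset.sum_sub_distrib]
      have : ∑ j, (t * c j) • v j = t • ∑ j, c j • v j := by
        rw [Finset.smul_sum]
        exact Finset.sum_congr rfl (fun j _ => (smul_smul t (c j) (v j)).symm)
      rw [this, hcsum, smul_zero, sub_zero]
    obtain ⟨mu, h1, h2, h3, h4⟩ := ih lam' hlam'pos hcard'
    exact ⟨mu, h1, fun j h => h2 j (hlam'0 j h), h3.trans hsum', h4⟩

private lemma extend_indep {M n : ℕ} (v : Fin M → (Fin n → ℝ)) (k : ℕ) :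
    ∀ S : Finset (Fin M), M ≤ k + S.card → Set.InjOn v ↑S →
      LinearIndependent ℝ ((↑) : (v '' ↑S) → (Fin n → ℝ)) →
      ∃ J : Finset (Fin M), S ⊆ J ∧ Set.InjOn v ↑J ∧
        LinearIndependent ℝ ((↑) : (v '' ↑J) → (Fin n → ℝ)) ∧
        Submodule.span ℝ (Set.range v) ≤ Submodule.span ℝ (v '' ↑J) := by
  classical
  induction k with
  | zero =>
    intro S hcard hinj hind
    have hS : S = Finset.univ := Finset.eq_univ_of_card S
      (le_antisymm (by simpa using S.card_le_univ) (by simpa using hcard))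
    refine ⟨S, Finset.Subset.refl S, hinj, hind, ?_⟩
    apply Submodule.span_mono
    rintro w ⟨j, rfl⟩
    exact ⟨j, by simp [hS], rfl⟩
  | succ k ih =>
    intro S hcard hinj hind
    by_cases hall : ∀ j, v j ∈ Submodule.span ℝ (v '' ↑S)
    · refine ⟨S, Finset.Subset.refl S, hinj, hind, ?_⟩
      rw [Submodule.span_le]
      rintro w ⟨j, rfl⟩
      exact hall j
    push_neg at hall
    obtain ⟨j₀, hj₀⟩ := hall
    have hj₀im : v j₀ ∉ v '' ↑S := fun h => hj₀ (Submodule.subset_span h)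
    have hj₀S : j₀ ∉ S := fun h => hj₀im ⟨j₀, by simpa using h, rfl⟩
    have hcoe : ((insert j₀ S : Finset (Fin M)) : Set (Fin M)) = insert j₀ ↑S := by
      simp
    have hinj' : Set.InjOn v ↑(insert j₀ S) := by
      rw [hcoe]
      exact (Set.injOn_insert (by simpa using hj₀S)).mpr ⟨hinj, hj₀im⟩
    have him : v '' ↑(insert j₀ S) = insert (v j₀) (v '' ↑S) := by
      rw [hcoe, Set.image_insert_eq]
    have hind' : LinearIndependent ℝ ((↑) : (v '' ↑(insert j₀ S)) → (Fin n → ℝ)) := by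
      rw [him]
      exact LinearIndepOn.id_insert hind hj₀
    have hcard' : M ≤ k + (insert j₀ S).card := by
      rw [Finset.card_insert_of_notMem hj₀S]; omega
    obtain ⟨J, hJ1, hJ2, hJ3, hJ4⟩ := ih (insert j₀ S) hcard' hinj' hind'
    exact ⟨J, (Finset.subset_insert j₀ S).trans hJ1, hJ2, hJ3, hJ4⟩

/-- If every player's KKT system holds at `x`, then for each player `i` there is a
label set `J_i` with `|J_i| = rank A_i`, `rank A_{i,J_i} = rank A_i`, and a
nonnegative multiplier vector supported on `J_i` satisfying the simplified KKT
system (Theorem 3.2 of the paper). -/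
theorem KKT_decomposition {N : ℕ} (n m : Fin N → ℕ)
    (A : ∀ i, Matrix (Fin (m i)) (Fin (n i)) ℝ)
    (x : ∀ i, Fin (n i) → ℝ) (b : ∀ i, Fin (m i) → ℝ)
    (grad : ∀ i, Fin (n i) → ℝ)
    (hfeas : ∀ i, ∀ j, 0 ≤ ((A i).mulVec (x i) - b i) j)
    (hKKT : ∀ i, ∃ lam : Fin (m i) → ℝ, (∀ j, 0 ≤ lam j) ∧
      grad i = (A i)ᵀ.mulVec lam ∧
      ∀ j, lam j * (((A i).mulVec (x i) - b i) j) = 0) :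
    ∀ i, ∃ J : Finset (Fin (m i)), J.card = (A i).rank ∧
      ((A i).submatrix (Subtype.val : {j // j ∈ J} → Fin (m i)) id).rank = (A i).rank ∧
      ∃ mu : Fin (m i) → ℝ, (∀ j, 0 ≤ mu j) ∧ (∀ j ∉ J, mu j = 0) ∧
        grad i = (A i)ᵀ.mulVec mu ∧
        ∀ j, mu j * (((A i).mulVec (x i) - b i) j) = 0 := by
  classical
  intro i
  obtain ⟨lam, hlpos, hgrad, hcompl⟩ := hKKT i
  set v : Fin (m i) → (Fin (n i) → ℝ) := fun j => A i j with hv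
  obtain ⟨mu, hmupos, hmusupp, hmusum, hmuind⟩ := carath v _ lam hlpos le_rfl
  set S₀ : Finset (Fin (m i)) := Finset.univ.filter (fun j => mu j ≠ 0) with hS₀
  have hS₀coe : (↑S₀ : Set (Fin (m i))) = {j | mu j ≠ 0} := by
    ext j; simp [hS₀]
  have hinj : Set.InjOn v {j | mu j ≠ 0} := by
    intro a ha b hb hab
    have : (⟨a, ha⟩ : {j // mu j ≠ 0}) = ⟨b, hb⟩ := hmuind.injective hab
    exact congrArg Subtype.val this
  have hsetind : LinearIndependent ℝ ((↑) : (v '' {j | mu j ≠ 0}) → (Fin (n i) → ℝ)) :=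
    (linearIndepOn_iff_image hinj).mp hmuind
  obtain ⟨J, hSJ, hJinj, hJind, hJspan⟩ := extend_indep v (m i) S₀
    (Nat.le_add_right _ _) (hS₀coe ▸ hinj) (by rw [hS₀coe]; exact hsetind)
  -- span equality
  have hspan_eq : Submodule.span ℝ (v '' ↑J) = Submodule.span ℝ (Set.range v) :=
    le_antisymm (Submodule.span_mono (Set.image_subset_range v ↑J)) hJspan
  have hfr : Module.finrank ℝ (Submodule.span ℝ (v '' ↑J)) = J.card := by
    rw [Set.image_eq_range, finrank_span_eq_card ((linearIndepOn_iff_image hJinj).mpr hJind)]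
    simp
  have hrankA : (A i).rank = Module.finrank ℝ (Submodule.span ℝ (Set.range v)) :=
    (A i).rank_eq_finrank_span_row
  have hcardJ : J.card = (A i).rank := by
    rw [hrankA, ← hspan_eq, hfr]
  refine ⟨J, hcardJ, ?_, mu, hmupos, ?_, ?_, ?_⟩
  · -- submatrix rank
    set B := (A i).submatrix (Subtype.val : {j // j ∈ J} → Fin (m i)) id with hB
    have hrangeB : Set.range B = v '' ↑J := by
      ext w
      constructor
      · rintro ⟨⟨j, hj⟩, rfl⟩; exact ⟨j, hj, rfl⟩
      · rintro ⟨j, hj, rfl⟩; exact ⟨⟨j, hj⟩, rfl⟩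
    rw [B.rank_eq_finrank_span_row, Matrix.row, hrangeB, hspan_eq, hrankA]
  · intro j hj
    by_contra h0
    exact hj (hSJ (by simp [hS₀, h0]))
  · rw [hgrad, mulVecT_eq_sum, mulVecT_eq_sum]
    exact hmusum.symm
  · intro j
    by_cases hmj : mu j = 0
    · rw [hmj, zero_mul]
    · have hlj : lam j ≠ 0 := fun h => hmj (hmusupp j h)
      have := hcompl j
      rcases mul_eq_zero.mp this with h | h
      · exact absurd h hlj
      · rw [h, mul_zero]
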